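/- arXiv:2603.03114 — 2 statements merged into one kernel-verified Lean document; each statement's English description precedes it below -/
import Mathlib

section
/- If U is a unitary operator on ℓ²(ℤ) that is banded with band width R > 0, then for every ψ ∈ D(X) one has ‖X U ψ − U X ψ‖ ≤ R(R+1)·‖ψ‖; in particular the commutator XU − UX, initially defined on D(X), extends uniquely to a bounded linear operator P on all of ℓ²(ℤ). -/
open scoped ENNReal ComplexConjugate Classical
open Filter MeasureTheory

set_option maxHeartbeats 1000000

noncomputable section

abbrev l2Z : Type := lp (fun _ : ℤ => ℂ) 2

/-- The standard basis vector `δ_n` of `ℓ²(ℤ)`. -/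
def deltaVec (n : ℤ) : l2Z := lp.single 2 n 1

/-- Membership in the domain of the position operator `X`. -/
def InDomX (ψ : l2Z) : Prop := Memℓp (fun n : ℤ => (n : ℂ) * ψ n) 2

/-- The position operator `X`, defined (with junk value `0` off its domain). -/
def posX (ψ : l2Z) : l2Z :=
  if h : InDomX ψ then (⟨fun n : ℤ => (n : ℂ) * ψ n, h⟩ : l2Z) else 0

/-- A bounded operator on `ℓ²(ℤ)` is banded if its matrix elements vanish far from the
diagonal. -/
def Banded (U : l2Z →L[ℂ] l2Z) : Prop :=
  ∃ R : ℝ, 0 < R ∧ ∀ n m : ℤ, R < |(n : ℝ) - (m : ℝ)| →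
    (inner ℂ (deltaVec n) (U (deltaVec m)) : ℂ) = 0

/-- `‖X ψ‖²`, computed as an extended real (possibly `+∞`). -/
def XnormSq (ψ : l2Z) : ℝ≥0∞ := ∑' n : ℤ, ENNReal.ofReal ((n : ℝ) ^ 2 * ‖ψ n‖ ^ 2)


private lemma hp2 : (0:ℝ) < (2:ℝ≥0∞).toReal := by norm_num

private lemma l2_smul_apply (r : ℂ) (ψ : l2Z) (n : ℤ) : (r • ψ) n = r * ψ n := by
  rw [lp.coeFn_smul]; simp

private lemma sum_abs_Icc (N : ℕ) :
    ∑ k ∈ Finset.Icc (-(N:ℤ)) (N:ℤ), |k| = N * (N+1) := by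
  induction N with
  | zero => simp
  | succ n ih =>
    have h : Finset.Icc (-((n:ℤ)+1)) ((n:ℤ)+1) =
        insert (-((n:ℤ)+1)) (insert ((n:ℤ)+1) (Finset.Icc (-(n:ℤ)) (n:ℤ))) := by
      ext k; simp only [Finset.mem_Icc, Finset.mem_insert]; omega
    push_cast
    rw [h, Finset.sum_insert (by simp only [Finset.mem_insert, Finset.mem_Icc]; omega),
      Finset.sum_insert (by simp only [Finset.mem_Icc]; omega), ih]
    have h1 : |(-((n:ℤ)+1))| = (n:ℤ)+1 := by rw [abs_neg]; exact abs_of_nonneg (by omega)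
    have h2 : |((n:ℤ)+1)| = (n:ℤ)+1 := abs_of_nonneg (by omega)
    rw [h1, h2]; push_cast; ring

private lemma shift_mem {c : ℤ → ℂ} (hc : ∀ n, ‖c n‖ ≤ 1) (k : ℤ) (ψ : l2Z) :
    Memℓp (fun n : ℤ => c n * ψ (n - k)) 2 := by
  apply memℓp_gen
  have hψ : Summable (fun n : ℤ => ‖ψ n‖ ^ (2:ℝ≥0∞).toReal) := (lp.memℓp ψ).summable hp2
  have hsh : Summable (fun n : ℤ => ‖ψ (n - k)‖ ^ (2:ℝ≥0∞).toReal) :=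
    (Equiv.subRight k).summable_iff.mpr hψ
  refine hsh.of_nonneg_of_le (fun n => by positivity) (fun n => ?_)
  refine Real.rpow_le_rpow (norm_nonneg _) ?_ hp2.le
  rw [norm_mul]
  exact mul_le_of_le_one_left (norm_nonneg _) (hc n)

private def shFun (k : ℤ) (c : ℤ → ℂ) (hc : ∀ n, ‖c n‖ ≤ 1) (ψ : l2Z) : l2Z :=
  (⟨fun n : ℤ => c n * ψ (n - k), shift_mem hc k ψ⟩ : l2Z)

private lemma shFun_apply (k : ℤ) (c : ℤ → ℂ) (hc : ∀ n, ‖c n‖ ≤ 1) (ψ : l2Z) (n : ℤ) :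
    (shFun k c hc ψ) n = c n * ψ (n - k) := rfl

private lemma shift_norm {c : ℤ → ℂ} (hc : ∀ n, ‖c n‖ ≤ 1) (k : ℤ) (ψ : l2Z) :
    ‖shFun k c hc ψ‖ ≤ ‖ψ‖ := by
  set g : l2Z := shFun k c hc ψ with hg
  by_contra hlt
  push_neg at hlt
  have h0 := Real.rpow_lt_rpow (norm_nonneg ψ) hlt hp2
  rw [lp.norm_rpow_eq_tsum hp2 g, lp.norm_rpow_eq_tsum hp2 ψ] at h0
  have hψ : Summable (fun n : ℤ => ‖ψ n‖ ^ (2:ℝ≥0∞).toReal) := (lp.memℓp ψ).summable hp2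
  have hsh : Summable (fun n : ℤ => ‖ψ (n - k)‖ ^ (2:ℝ≥0∞).toReal) :=
    (Equiv.subRight k).summable_iff.mpr hψ
  have hle : (∑' n : ℤ, ‖g n‖ ^ (2:ℝ≥0∞).toReal) ≤ ∑' n : ℤ, ‖ψ n‖ ^ (2:ℝ≥0∞).toReal := by
    calc (∑' n : ℤ, ‖g n‖ ^ (2:ℝ≥0∞).toReal)
        ≤ ∑' n : ℤ, ‖ψ (n - k)‖ ^ (2:ℝ≥0∞).toReal := by
          refine Summable.tsum_le_tsum (fun n => ?_) ((lp.memℓp g).summable hp2) hsh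
          refine Real.rpow_le_rpow (norm_nonneg _) ?_ hp2.le
          rw [hg, shFun_apply, norm_mul]
          exact mul_le_of_le_one_left (norm_nonneg _) (hc n)
      _ = ∑' n : ℤ, ‖ψ n‖ ^ (2:ℝ≥0∞).toReal :=
          (Equiv.subRight k).tsum_eq (fun n => ‖ψ n‖ ^ (2:ℝ≥0∞).toReal)
  linarith

private def shOp (k : ℤ) (c : ℤ → ℂ) (hc : ∀ n, ‖c n‖ ≤ 1) : l2Z →L[ℂ] l2Z :=
  LinearMap.mkContinuous
    { toFun := shFun k c hc
      map_add' := fun ψ φ => lp.ext (funext fun n => by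
        rw [shFun_apply]
        show c n * (ψ + φ) (n - k) = (shFun k c hc ψ + shFun k c hc φ) n
        rw [lp.coeFn_add, Pi.add_apply, lp.coeFn_add, Pi.add_apply, shFun_apply, shFun_apply]
        ring)
      map_smul' := fun r ψ => lp.ext (funext fun n => by
        rw [shFun_apply]
        show c n * (r • ψ) (n - k) = (r • shFun k c hc ψ) n
        rw [l2_smul_apply, l2_smul_apply, shFun_apply]
        ring) }
    1 (fun ψ => by simpa using shift_norm hc k ψ)

private lemma shOp_apply (k : ℤ) (c : ℤ → ℂ) (hc : ∀ n, ‖c n‖ ≤ 1) (ψ : l2Z) (n : ℤ) :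
    (shOp k c hc ψ) n = c n * ψ (n - k) := rfl

private lemma shOp_norm (k : ℤ) (c : ℤ → ℂ) (hc : ∀ n, ‖c n‖ ≤ 1) (ψ : l2Z) :
    ‖shOp k c hc ψ‖ ≤ ‖ψ‖ := shift_norm hc k ψ

private lemma coord_formula (U : l2Z →L[ℂ] l2Z) (R : ℝ) (hR : 0 < R)
    (hband : ∀ n m : ℤ, R < |(n : ℝ) - (m : ℝ)| →
      (inner ℂ (deltaVec n) (U (deltaVec m)) : ℂ) = 0) (ψ : l2Z) (n : ℤ) :
    (U ψ) n = ∑ k ∈ Finset.Icc (-⌊R⌋) ⌊R⌋,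
      (inner ℂ (deltaVec n) (U (deltaVec (n - k))) : ℂ) * ψ (n - k) := by
  classical
  have h1 : HasSum (fun m : ℤ => lp.single 2 m (ψ m)) ψ :=
    lp.hasSum_single (by norm_num) ψ
  have h2 : HasSum (fun m : ℤ => (inner ℂ (deltaVec n) (U (lp.single 2 m (ψ m))) : ℂ))
      ((inner ℂ (deltaVec n) (U ψ) : ℂ)) := h1.mapL ((innerSL ℂ (deltaVec n)).comp U)
  set f : ℤ → ℂ := fun m => (inner ℂ (deltaVec n) (U (lp.single 2 m (ψ m))) : ℂ) with hfdef
  have hf : ∀ m, f m = (inner ℂ (deltaVec n) (U (deltaVec m)) : ℂ) * ψ m := by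
    intro m
    have hs : lp.single 2 m (ψ m) = ψ m • deltaVec m := by
      rw [deltaVec, ← lp.single_smul, smul_eq_mul, mul_one]
    show (inner ℂ (deltaVec n) (U (lp.single 2 m (ψ m))) : ℂ) = _
    rw [hs, U.map_smul, inner_smul_right, mul_comm]
  set S : Finset ℤ := (Finset.Icc (-⌊R⌋) ⌊R⌋).image (fun k => n - k) with hS
  have hzero : ∀ m ∉ S, f m = 0 := by
    intro m hm
    rw [hf]
    have hk : ¬ (n - m ∈ Finset.Icc (-⌊R⌋) ⌊R⌋) := by
      intro h
      exact hm (Finset.mem_image.mpr ⟨n - m, h, by ring⟩)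
    rw [Finset.mem_Icc] at hk
    have habs : ⌊R⌋ < |n - m| := by rw [lt_abs]; omega
    have hband0 : (inner ℂ (deltaVec n) (U (deltaVec m)) : ℂ) = 0 := by
      apply hband
      have h3 : ((⌊R⌋:ℤ):ℝ) + 1 ≤ ((|n - m| : ℤ) : ℝ) := by exact_mod_cast habs
      have h4 : ((|n - m| : ℤ) : ℝ) = |(n:ℝ) - (m:ℝ)| := by
        rw [Int.cast_abs]; push_cast; ring_nf
      calc R < (⌊R⌋:ℝ) + 1 := Int.lt_floor_add_one R
        _ ≤ |(n:ℝ) - (m:ℝ)| := by rw [← h4]; exact_mod_cast h3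
    rw [hband0, zero_mul]
  have h3 : HasSum f (∑ m ∈ S, f m) := hasSum_sum_of_ne_finset_zero hzero
  have h4 : (inner ℂ (deltaVec n) (U ψ) : ℂ) = ∑ m ∈ S, f m := h2.unique h3
  have h5 : (inner ℂ (deltaVec n) (U ψ) : ℂ) = (U ψ) n := by
    rw [deltaVec, lp.inner_single_left]
    simp
  have h6 : ∑ m ∈ S, f m = ∑ k ∈ Finset.Icc (-⌊R⌋) ⌊R⌋, f (n - k) :=
    Finset.sum_image (fun a _ b _ h => by omega)
  rw [← h5, h4, h6]
  exact Finset.sum_congr rfl (fun k _ => by rw [hf])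


/-- If `U` is a unitary on `ℓ²(ℤ)` banded with band width `R > 0`, then for
every `ψ ∈ D(X)` one has `‖XUψ - UXψ‖ ≤ R(R+1)‖ψ‖`; in particular the commutator `XU - UX`,
initially defined on `D(X)`, extends uniquely to a bounded operator `P` on all of `ℓ²(ℤ)`. -/
theorem stmt_2
    (U : l2Z →L[ℂ] l2Z) (hU : U ∈ unitary (l2Z →L[ℂ] l2Z))
    (R : ℝ) (hR : 0 < R)
    (hband : ∀ n m : ℤ, R < |(n : ℝ) - (m : ℝ)| →
      (inner ℂ (deltaVec n) (U (deltaVec m)) : ℂ) = 0) :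
    (∀ ψ : l2Z, InDomX ψ → ‖posX (U ψ) - U (posX ψ)‖ ≤ R * (R + 1) * ‖ψ‖) ∧
      ∃! P : l2Z →L[ℂ] l2Z, ∀ ψ : l2Z, InDomX ψ → P ψ = posX (U ψ) - U (posX ψ) := by
  classical
  have hK0 : (0:ℤ) ≤ ⌊R⌋ := Int.floor_nonneg.mpr hR.le
  have habd : ∀ n m : ℤ, ‖(inner ℂ (deltaVec n) (U (deltaVec m)) : ℂ)‖ ≤ 1 := by
    intro n m
    have h1 : ‖deltaVec n‖ = 1 := by
      rw [deltaVec]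
      simpa using lp.norm_single hp2 (fun _ : ℤ => (1:ℂ)) n
    have h2 : ‖U (deltaVec m)‖ = 1 := by
      rw [U.norm_map_of_mem_unitary hU, deltaVec]
      simpa using lp.norm_single hp2 (fun _ : ℤ => (1:ℂ)) m
    calc ‖(inner ℂ (deltaVec n) (U (deltaVec m)) : ℂ)‖
        ≤ ‖deltaVec n‖ * ‖U (deltaVec m)‖ := norm_inner_le_norm _ _
      _ = 1 := by rw [h1, h2, mul_one]
  set A : ℤ → (l2Z →L[ℂ] l2Z) := fun k =>
    shOp k (fun n => inner ℂ (deltaVec n) (U (deltaVec (n - k)))) (fun n => habd n (n - k)) with hA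
  set P : l2Z →L[ℂ] l2Z := ∑ k ∈ Finset.Icc (-⌊R⌋) ⌊R⌋, (k:ℂ) • A k with hP
  have hPsum : ∀ ψ : l2Z, P ψ = ∑ k ∈ Finset.Icc (-⌊R⌋) ⌊R⌋, ((k:ℂ) • A k) ψ := by
    intro ψ; rw [hP]; exact ContinuousLinearMap.sum_apply _ _ _
  have hPapp : ∀ (ψ : l2Z) (n : ℤ), (P ψ) n =
      ∑ k ∈ Finset.Icc (-⌊R⌋) ⌊R⌋,
        (k:ℂ) * ((inner ℂ (deltaVec n) (U (deltaVec (n - k))) : ℂ) * ψ (n - k)) := by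
    intro ψ n
    rw [hPsum, lp.coeFn_sum, Finset.sum_apply]
    refine Finset.sum_congr rfl (fun k _ => ?_)
    rw [ContinuousLinearMap.smul_apply, l2_smul_apply]
    simp only [hA]
    rw [shOp_apply]
  have key : ∀ ψ : l2Z, InDomX ψ → posX (U ψ) - U (posX ψ) = P ψ := by
    intro ψ hψ
    have hφdef : posX ψ = (⟨fun n : ℤ => (n:ℂ) * ψ n, hψ⟩ : l2Z) := dif_pos hψ
    set φ : l2Z := (⟨fun n : ℤ => (n:ℂ) * ψ n, hψ⟩ : l2Z) with hφ
    have hφcoe : ∀ m : ℤ, φ m = (m:ℂ) * ψ m := fun m => rfl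
    have hsum : ∀ n : ℤ, (n:ℂ) * (U ψ) n = (U φ) n + (P ψ) n := by
      intro n
      rw [coord_formula U R hR hband ψ n, coord_formula U R hR hband φ n, hPapp,
        Finset.mul_sum, ← Finset.sum_add_distrib]
      refine Finset.sum_congr rfl (fun k _ => ?_)
      rw [hφcoe]
      push_cast
      ring
    have hdomU : InDomX (U ψ) := by
      have he : (fun n : ℤ => (n:ℂ) * (U ψ) n) = (fun n : ℤ => (U φ) n + (P ψ) n) :=
        funext hsum
      rw [InDomX, he]
      exact Memℓp.add (lp.memℓp (U φ)) (lp.memℓp (P ψ))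
    have hq : posX (U ψ) = (⟨fun n : ℤ => (n:ℂ) * (U ψ) n, hdomU⟩ : l2Z) := dif_pos hdomU
    rw [hq, hφdef]
    refine lp.ext (funext fun n => ?_)
    rw [lp.coeFn_sub, Pi.sub_apply]
    show (n:ℂ) * (U ψ) n - (U φ) n = (P ψ) n
    rw [hsum n]; ring
  have hbound : ∀ ψ : l2Z, ‖P ψ‖ ≤ R * (R + 1) * ‖ψ‖ := by
    intro ψ
    have h2 : ‖P ψ‖ ≤ ∑ k ∈ Finset.Icc (-⌊R⌋) ⌊R⌋, ((|k| : ℤ) : ℝ) * ‖ψ‖ := by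
      rw [hPsum]
      refine (norm_sum_le _ _).trans (Finset.sum_le_sum (fun k _ => ?_))
      rw [ContinuousLinearMap.smul_apply, norm_smul]
      have hk : ‖((k:ℤ):ℂ)‖ = ((|k| : ℤ) : ℝ) := by
        rw [Int.cast_abs]
        simp
      rw [hk]
      have := shOp_norm k (fun n => inner ℂ (deltaVec n) (U (deltaVec (n - k))))
        (fun n => habd n (n - k)) ψ
      simp only [hA]
      exact mul_le_mul_of_nonneg_left this (by positivity)
    have h3 : ∑ k ∈ Finset.Icc (-⌊R⌋) ⌊R⌋, ((|k| : ℤ) : ℝ) ≤ R * (R + 1) := by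
      have hN := sum_abs_Icc ⌊R⌋.toNat
      rw [Int.toNat_of_nonneg hK0] at hN
      have hcast : ∑ k ∈ Finset.Icc (-⌊R⌋) ⌊R⌋, ((|k| : ℤ) : ℝ)
          = ((∑ k ∈ Finset.Icc (-⌊R⌋) ⌊R⌋, |k| : ℤ) : ℝ) := by push_cast; rfl
      rw [hcast, hN]
      have hfl : (⌊R⌋ : ℝ) ≤ R := Int.floor_le R
      have hfl0 : (0:ℝ) ≤ (⌊R⌋:ℝ) := by exact_mod_cast hK0
      push_cast
      nlinarith
    calc ‖P ψ‖ ≤ (∑ k ∈ Finset.Icc (-⌊R⌋) ⌊R⌋, ((|k| : ℤ) : ℝ)) * ‖ψ‖ := by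
          rw [Finset.sum_mul]; exact h2
      _ ≤ R * (R + 1) * ‖ψ‖ := mul_le_mul_of_nonneg_right h3 (norm_nonneg ψ)
  refine ⟨fun ψ hψ => ?_, ⟨P, fun ψ hψ => (key ψ hψ).symm, ?_⟩⟩
  · rw [key ψ hψ]; exact hbound ψ
  · intro Q hQ
    have hdelta : ∀ n : ℤ, InDomX (deltaVec n) := by
      intro n
      have he : (fun m : ℤ => (m:ℂ) * (deltaVec n) m) = ⇑((n:ℂ) • deltaVec n) := by
        funext m
        rw [l2_smul_apply]
        by_cases h : m = n
        · subst h; rfl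
        · rw [deltaVec, lp.single_apply_ne 2 n _ h, mul_zero, mul_zero]
      rw [InDomX, he]
      exact lp.memℓp _
    have hsingle : ∀ (m : ℤ) (c : ℂ), Q (lp.single 2 m c) = P (lp.single 2 m c) := by
      intro m c
      have h1 : lp.single 2 m c = c • deltaVec m := by
        rw [deltaVec, ← lp.single_smul, smul_eq_mul, mul_one]
      rw [h1, _root_.map_smul, _root_.map_smul, hQ _ (hdelta m), key _ (hdelta m)]
    refine ContinuousLinearMap.ext (fun f => ?_)
    have h1 : HasSum (fun m : ℤ => lp.single 2 m (f m)) f := lp.hasSum_single (by norm_num) f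
    have h2 : HasSum (fun m : ℤ => Q (lp.single 2 m (f m))) (Q f) := h1.mapL Q
    have h3 : HasSum (fun m : ℤ => P (lp.single 2 m (f m))) (P f) := h1.mapL P
    have h2' : HasSum (fun m : ℤ => P (lp.single 2 m (f m))) (Q f) := by
      simpa only [hsingle] using h2
    exact h2'.unique h3

end
end

section
/- Let U be a banded unitary operator on ℓ²(ℤ) admitting an orthonormal basis (φ_j)_{j≥1} of ℓ²(ℤ) consisting of eigenvectors of U, each belonging to D(X). Let φ and ψ be eigenvectors of U lying in D(X), and let P denote the bounded extension of XU − UX to ℓ²(ℤ), with P(s) := U^{−s} P U^{s}. Then lim_{t→∞} (1/t²) Σ_{s=0}^{t−1} Σ_{s̃=0}^{t−1} ⟨P(s)φ, P(s̃)ψ⟩ = 0. -/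
open scoped ENNReal ComplexConjugate Classical
open Filter MeasureTheory

noncomputable section

lemma InDomX.smul {χ : l2Z} (h : InDomX χ) (c : ℂ) : InDomX (c • χ) := by
  have : (fun n : ℤ => (n : ℂ) * (c • χ) n) = c • (fun n : ℤ => (n : ℂ) * χ n) := by
    funext n
    rw [lp.coeFn_smul]
    simp [Pi.smul_apply, smul_eq_mul]; ring
  rw [InDomX, this]
  exact h.const_smul c

lemma posX_smul {χ : l2Z} (h : InDomX χ) (c : ℂ) : posX (c • χ) = c • posX χ := by
  rw [posX, posX, dif_pos (h.smul c), dif_pos h]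
  apply lp.ext
  funext n
  show (n : ℂ) * (c • χ) n = (c • (⟨fun n : ℤ => (n : ℂ) * χ n, h⟩ : l2Z)) n
  simp only [lp.coeFn_smul, Pi.smul_apply, smul_eq_mul]
  show (n : ℂ) * (c * χ n) = c * ((n : ℂ) * χ n)
  ring

lemma unitary_norm_map {V : l2Z →L[ℂ] l2Z} (hV : V ∈ unitary (l2Z →L[ℂ] l2Z)) (x : l2Z) :
    ‖V x‖ = ‖x‖ := by
  have h1 : star V * V = 1 := (Unitary.mem_iff.mp hV).1
  have hinner : (inner ℂ (V x) (V x) : ℂ) = inner ℂ x x := by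
    rw [ContinuousLinearMap.star_eq_adjoint] at h1
    rw [← ContinuousLinearMap.adjoint_inner_right V x (V x)]
    have : (ContinuousLinearMap.adjoint V) (V x) = x := by
      have := congrArg (fun A : l2Z →L[ℂ] l2Z => A x) h1
      simpa [ContinuousLinearMap.mul_apply] using this
    rw [this]
  rw [norm_eq_sqrt_re_inner (𝕜 := ℂ) (V x), norm_eq_sqrt_re_inner (𝕜 := ℂ) x, hinner]

/-- Key telescoping bound. -/
lemma sum_bound (U : l2Z →L[ℂ] l2Z) (hU : U ∈ unitary (l2Z →L[ℂ] l2Z))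
    (P : l2Z →L[ℂ] l2Z)
    (hP : ∀ χ : l2Z, InDomX χ → P χ = posX (U χ) - U (posX χ))
    (χ : l2Z) (hχ : InDomX χ) (hχ0 : χ ≠ 0) (w : ℂ) (hw : U χ = w • χ) (t : ℕ) :
    ‖∑ s ∈ Finset.range t, ((star U) ^ s) (P ((U ^ s) χ))‖ ≤ 2 * ‖posX χ‖ := by
  have h1 : star U * U = 1 := (Unitary.mem_iff.mp hU).1
  have h2 : U * star U = 1 := (Unitary.mem_iff.mp hU).2
  have hwn : ‖w‖ = 1 := by
    have h := unitary_norm_map hU χ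
    rw [hw, norm_smul] at h
    have hn : ‖χ‖ ≠ 0 := norm_ne_zero_iff.mpr hχ0
    have h' : ‖w‖ * ‖χ‖ = 1 * ‖χ‖ := by rw [one_mul]; exact h
    exact mul_right_cancel₀ hn h'
  have hUstar : star U ∈ unitary (l2Z →L[ℂ] l2Z) := Unitary.star_mem hU
  -- eigen-iteration
  have hUs : ∀ s : ℕ, (U ^ s) χ = w ^ s • χ := by
    intro s
    induction s with
    | zero => simp
    | succ n ih =>
      rw [pow_succ, ContinuousLinearMap.mul_apply, hw, ContinuousLinearMap.map_smul, ih,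
        smul_smul, ← pow_succ']
  -- commute
  have hc : Commute (star U) U := h1.trans h2.symm
  -- the telescoping sequence
  set e : ℕ → l2Z := fun s => w ^ s • ((star U) ^ s) (posX χ) with he
  have key : ∀ s : ℕ, ((star U) ^ s) (P ((U ^ s) χ)) = U (e (s+1)) - U (e s) := by
    intro s
    have hPχ : P χ = w • posX χ - U (posX χ) := by
      rw [hP χ hχ, hw, posX_smul hχ w]
    have hdom : InDomX ((U ^ s) χ) := by rw [hUs s]; exact hχ.smul _
    have hstep : P ((U ^ s) χ) = w ^ s • (w • posX χ - U (posX χ)) := by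
      rw [hUs s, ContinuousLinearMap.map_smul, hPχ]
    have hcomm : ((star U) ^ s) (U (posX χ)) = U (((star U) ^ s) (posX χ)) := by
      have := (hc.pow_left s)
      have := congrArg (fun A : l2Z →L[ℂ] l2Z => A (posX χ)) this
      simpa [ContinuousLinearMap.mul_apply] using this
    have hUe1 : U (e (s+1)) = w ^ (s+1) • ((star U) ^ s) (posX χ) := by
      rw [he]
      simp only [ContinuousLinearMap.map_smul]
      congr 1
      have : U * (star U) ^ (s+1) = (star U) ^ s := by
        rw [pow_succ']
        rw [← mul_assoc, h2, one_mul]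
      have := congrArg (fun A : l2Z →L[ℂ] l2Z => A (posX χ)) this
      simpa [ContinuousLinearMap.mul_apply] using this
    have hUe0 : U (e s) = w ^ s • U (((star U) ^ s) (posX χ)) := by
      rw [he]; simp [ContinuousLinearMap.map_smul]
    rw [hstep, hUe1, hUe0]
    simp only [ContinuousLinearMap.map_smul, map_sub, smul_sub, smul_smul]
    rw [hcomm]
    module
  calc ‖∑ s ∈ Finset.range t, ((star U) ^ s) (P ((U ^ s) χ))‖
      = ‖U (e t) - U (e 0)‖ := by
        rw [show (∑ s ∈ Finset.range t, ((star U) ^ s) (P ((U ^ s) χ)))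
            = ∑ s ∈ Finset.range t, (U (e (s+1)) - U (e s)) from
          Finset.sum_congr rfl fun s _ => key s, Finset.sum_range_sub (fun s => U (e s)) t]
    _ ≤ ‖U (e t)‖ + ‖U (e 0)‖ := norm_sub_le _ _
    _ = ‖e t‖ + ‖e 0‖ := by rw [unitary_norm_map hU, unitary_norm_map hU]
    _ ≤ ‖posX χ‖ + ‖posX χ‖ := by
        gcongr
        · rw [he]
          simp only [norm_smul, norm_pow, hwn, one_pow, one_mul]
          have : ((star U) ^ t) ∈ unitary (l2Z →L[ℂ] l2Z) := pow_mem hUstar t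
          rw [unitary_norm_map this]
        · rw [he]; simp
    _ = 2 * ‖posX χ‖ := by ring
/-- Let `U` be a banded unitary on `ℓ²(ℤ)` admitting an orthonormal basis of
eigenvectors each belonging to `D(X)`, let `φ, ψ` be eigenvectors of `U` lying in `D(X)`, and
let `P` denote the bounded extension of `XU - UX`, with `P(s) = U⁻ˢ P Uˢ`.  Then
`(1/t²) ∑_{s=0}^{t-1} ∑_{s̃=0}^{t-1} ⟨P(s)φ, P(s̃)ψ⟩ → 0` as `t → ∞`. -/
theorem stmt_5
    (U : l2Z →L[ℂ] l2Z) (hU : U ∈ unitary (l2Z →L[ℂ] l2Z)) (hband : Banded U)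
    (Φ : ℕ → l2Z) (hON : Orthonormal ℂ Φ)
    (hcomplete : (Submodule.span ℂ (Set.range Φ)).topologicalClosure = ⊤)
    (heigB : ∀ j, ∃ z : ℂ, U (Φ j) = z • Φ j)
    (hdomB : ∀ j, InDomX (Φ j))
    (P : l2Z →L[ℂ] l2Z)
    (hP : ∀ χ : l2Z, InDomX χ → P χ = posX (U χ) - U (posX χ))
    (φ ψ : l2Z) (hφ : InDomX φ) (hψ : InDomX ψ) (hφ0 : φ ≠ 0) (hψ0 : ψ ≠ 0)
    (hφe : ∃ w : ℂ, U φ = w • φ) (hψe : ∃ z : ℂ, U ψ = z • ψ) :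
    Tendsto
      (fun t : ℕ => (1 / (t : ℂ) ^ 2) *
        ∑ s ∈ Finset.range t, ∑ s' ∈ Finset.range t,
          (inner ℂ (((star U) ^ s) (P ((U ^ s) φ))) (((star U) ^ s') (P ((U ^ s') ψ))) : ℂ))
      atTop (nhds 0) := by
  obtain ⟨w, hw⟩ := hφe
  obtain ⟨z, hz⟩ := hψe
  have hA := sum_bound U hU P hP φ hφ hφ0 w hw
  have hB := sum_bound U hU P hP ψ hψ hψ0 z hz
  set a : ℕ → l2Z := fun s => ((star U) ^ s) (P ((U ^ s) φ)) with ha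
  set b : ℕ → l2Z := fun s => ((star U) ^ s) (P ((U ^ s) ψ)) with hb
  have hkey : ∀ t : ℕ,
      (∑ s ∈ Finset.range t, ∑ s' ∈ Finset.range t, (inner ℂ (a s) (b s') : ℂ))
        = inner ℂ (∑ s ∈ Finset.range t, a s) (∑ s' ∈ Finset.range t, b s') := by
    intro t
    rw [sum_inner]
    exact Finset.sum_congr rfl fun s _ => (inner_sum _ _ _).symm
  have hC : (0:ℝ) ≤ 2 * ‖posX φ‖ := by positivity
  have hD : (0:ℝ) ≤ 2 * ‖posX ψ‖ := by positivity
  have hbound : ∀ t : ℕ, ‖(1 / (t : ℂ) ^ 2) *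
      ∑ s ∈ Finset.range t, ∑ s' ∈ Finset.range t, (inner ℂ (a s) (b s') : ℂ)‖
      ≤ ((2 * ‖posX φ‖) * (2 * ‖posX ψ‖)) * (1 / (t:ℝ)) ^ 2 := by
    intro t
    rw [hkey t, norm_mul]
    have h1 : ‖(1 / (t:ℂ) ^ 2)‖ = (1 / (t:ℝ)) ^ 2 := by
      simp [norm_div, div_pow]
    rw [h1]
    have h2 : ‖(inner ℂ (∑ s ∈ Finset.range t, a s) (∑ s' ∈ Finset.range t, b s') : ℂ)‖
        ≤ (2 * ‖posX φ‖) * (2 * ‖posX ψ‖) := by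
      calc ‖(inner ℂ (∑ s ∈ Finset.range t, a s) (∑ s' ∈ Finset.range t, b s') : ℂ)‖
          ≤ ‖∑ s ∈ Finset.range t, a s‖ * ‖∑ s' ∈ Finset.range t, b s'‖ :=
            norm_inner_le_norm _ _
        _ ≤ (2 * ‖posX φ‖) * (2 * ‖posX ψ‖) := by
            exact mul_le_mul (hA t) (hB t) (norm_nonneg _) hC
    calc (1 / (t:ℝ)) ^ 2 * ‖(inner ℂ (∑ s ∈ Finset.range t, a s)
            (∑ s' ∈ Finset.range t, b s') : ℂ)‖
        ≤ (1 / (t:ℝ)) ^ 2 * ((2 * ‖posX φ‖) * (2 * ‖posX ψ‖)) := by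
          apply mul_le_mul_of_nonneg_left h2 (by positivity)
      _ = ((2 * ‖posX φ‖) * (2 * ‖posX ψ‖)) * (1 / (t:ℝ)) ^ 2 := by ring
  have hg : Tendsto (fun t : ℕ => ((2 * ‖posX φ‖) * (2 * ‖posX ψ‖)) * (1 / (t:ℝ)) ^ 2)
      atTop (nhds 0) := by
    have := ((tendsto_one_div_atTop_nhds_zero_nat.pow 2).const_mul
      ((2 * ‖posX φ‖) * (2 * ‖posX ψ‖)))
    simpa using this
  exact squeeze_zero_norm hbound hg

end
end
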